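/- If X = (X₁,…,X_k) is generated by a stationary ergodic process ρ_X and ρ is a known process measure, then the one-sample empirical distance d̂(X,ρ) = Σᵢ wᵢ|ν(X,Bᵢ) − ρ(Bᵢ)| converges almost surely to d(ρ_X, ρ) as k → ∞. -/

import Mathlib

open MeasureTheory Filter Topology

/-- Empirical sliding-window frequency of the (cylinder) set `S` of dimension `l`
in the sample given by the first `n` values of `X`. -/
noncomputable def nu (n : ℕ) (X : ℕ → ℝ) (l : ℕ) (S : Set (ℕ → ℝ)) : ℝ :=
  if l ≤ n ∧ 1 ≤ l then
    (∑ i ∈ Finset.range (n - l + 1),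
      S.indicator (fun _ => (1 : ℝ)) (fun j => X (i + j))) / (n - l + 1)
  else 0

/-- A finite-dimensional cylinder with rational endpoints. -/
structure Cylinder where
  dim : ℕ
  dimPos : 0 < dim
  a : Fin dim → ℚ
  b : Fin dim → ℚ

/-- The subset of `ℕ → ℝ` determined by a cylinder (it constrains the first `dim`
coordinates to lie in the corresponding rational-endpoint intervals). -/
def Cylinder.set (C : Cylinder) : Set (ℕ → ℝ) :=
  {x | ∀ j : Fin C.dim, (C.a j : ℝ) ≤ x j.val ∧ x j.val ≤ (C.b j : ℝ)}

/-- Distributional distance between two process measures. -/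
noncomputable def dd (w : ℕ → ℝ) (B : ℕ → Cylinder) (μ ν : Measure (ℕ → ℝ)) : ℝ :=
  ∑' i, w i * |(μ (B i).set).toReal - (ν (B i).set).toReal|

/-- Empirical distributional distance between two finite samples. -/
noncomputable def dhat (w : ℕ → ℝ) (B : ℕ → Cylinder)
    (n : ℕ) (X : ℕ → ℝ) (m : ℕ) (Y : ℕ → ℝ) : ℝ :=
  ∑' i, w i * |nu n X (B i).dim (B i).set - nu m Y (B i).dim (B i).set|

/-- One-sample empirical distributional distance to a known process measure. -/
noncomputable def dhat1 (w : ℕ → ℝ) (B : ℕ → Cylinder)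
    (n : ℕ) (X : ℕ → ℝ) (ρ : Measure (ℕ → ℝ)) : ℝ :=
  ∑' i, w i * |nu n X (B i).dim (B i).set - (ρ (B i).set).toReal|

/-- The left shift on `ℕ → ℝ`. -/
def shift : (ℕ → ℝ) → (ℕ → ℝ) := fun x n => x (n + 1)

/-- Concatenation of a word of length `k` with another word. -/
def conc (k : ℕ) (x y : ℕ → ℝ) : ℕ → ℝ := fun i => if i < k then x i else y (i - k)

section LimsupHelpers

lemma real_le_of_forall_pos_le_add {a b : ℝ} (h : ∀ ε : ℝ, 0 < ε → a ≤ b + ε) : a ≤ b := by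
  by_contra hab
  push_neg at hab
  have := h ((a - b) / 2) (by linarith)
  linarith

lemma limsup_le_limsup_of_tendsto_sub {u v : ℕ → ℝ}
    (h : Tendsto (fun n => u n - v n) atTop (𝓝 0))
    (hu0 : ∀ n, 0 ≤ u n) (hv0 : ∀ n, 0 ≤ v n) (hv1 : ∀ n, v n ≤ 1) :
    limsup u atTop ≤ limsup v atTop := by
  refine real_le_of_forall_pos_le_add fun ε hε => ?_
  have hev : ∀ᶠ n in atTop, u n ≤ v n + ε := by
    filter_upwards [h.eventually_lt_const hε] with n hn
    linarith
  have hbu : IsBoundedUnder (· ≥ ·) atTop u := isBoundedUnder_of ⟨0, fun n => hu0 n⟩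
  have hbv : IsBoundedUnder (· ≤ ·) atTop v := isBoundedUnder_of ⟨1, fun n => hv1 n⟩
  have hbv0 : IsBoundedUnder (· ≥ ·) atTop v := isBoundedUnder_of ⟨0, fun n => hv0 n⟩
  have hbv' : IsBoundedUnder (· ≤ ·) atTop (fun n => v n + ε) :=
    isBoundedUnder_of ⟨1 + ε, fun n => by linarith [hv1 n]⟩
  calc limsup u atTop ≤ limsup (fun n => v n + ε) atTop :=
        limsup_le_limsup hev hbu.isCoboundedUnder_le hbv'
    _ = limsup v atTop + ε := limsup_add_const atTop v ε hbv hbv0.isCoboundedUnder_le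

lemma limsup_eq_limsup_of_tendsto_sub {u v : ℕ → ℝ}
    (h : Tendsto (fun n => u n - v n) atTop (𝓝 0))
    (hu0 : ∀ n, 0 ≤ u n) (hu1 : ∀ n, u n ≤ 1)
    (hv0 : ∀ n, 0 ≤ v n) (hv1 : ∀ n, v n ≤ 1) :
    limsup u atTop = limsup v atTop := by
  refine le_antisymm (limsup_le_limsup_of_tendsto_sub h hu0 hv0 hv1) ?_
  have h' : Tendsto (fun n => v n - u n) atTop (𝓝 0) := by
    have := h.neg
    simpa using this
  exact limsup_le_limsup_of_tendsto_sub h' hv0 hu0 hu1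

lemma liminf_le_liminf_of_tendsto_sub {u v : ℕ → ℝ}
    (h : Tendsto (fun n => u n - v n) atTop (𝓝 0))
    (hu0 : ∀ n, 0 ≤ u n) (hu1 : ∀ n, u n ≤ 1)
    (hv0 : ∀ n, 0 ≤ v n) (hv1 : ∀ n, v n ≤ 1) :
    liminf u atTop ≤ liminf v atTop := by
  refine real_le_of_forall_pos_le_add fun ε hε => ?_
  have hev : ∀ᶠ n in atTop, u n ≤ v n + ε := by
    filter_upwards [h.eventually_lt_const hε] with n hn
    linarith
  have hbu : IsBoundedUnder (· ≥ ·) atTop u := isBoundedUnder_of ⟨0, fun n => hu0 n⟩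
  have hbu1 : IsBoundedUnder (· ≤ ·) atTop u := isBoundedUnder_of ⟨1, fun n => hu1 n⟩
  have hbv0 : IsBoundedUnder (· ≥ ·) atTop v := isBoundedUnder_of ⟨0, fun n => hv0 n⟩
  have hbv1 : IsBoundedUnder (· ≤ ·) atTop v := isBoundedUnder_of ⟨1, fun n => hv1 n⟩
  have hbv1' : IsBoundedUnder (· ≤ ·) atTop (fun n => v n + ε) :=
    isBoundedUnder_of ⟨1 + ε, fun n => by linarith [hv1 n]⟩
  calc liminf u atTop ≤ liminf (fun n => v n + ε) atTop :=
        liminf_le_liminf hev hbu hbv1'.isCoboundedUnder_ge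
    _ = liminf v atTop + ε := liminf_add_const atTop v ε hbv1.isCoboundedUnder_ge hbv0

lemma liminf_eq_liminf_of_tendsto_sub {u v : ℕ → ℝ}
    (h : Tendsto (fun n => u n - v n) atTop (𝓝 0))
    (hu0 : ∀ n, 0 ≤ u n) (hu1 : ∀ n, u n ≤ 1)
    (hv0 : ∀ n, 0 ≤ v n) (hv1 : ∀ n, v n ≤ 1) :
    liminf u atTop = liminf v atTop := by
  refine le_antisymm (liminf_le_liminf_of_tendsto_sub h hu0 hu1 hv0 hv1) ?_
  have h' : Tendsto (fun n => v n - u n) atTop (𝓝 0) := by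
    have := h.neg
    simpa using this
  exact liminf_le_liminf_of_tendsto_sub h' hv0 hv1 hu0 hu1

end LimsupHelpers
section Maximal

variable {α : Type*} [MeasurableSpace α] {μ : Measure α} [IsProbabilityMeasure μ]
  {T : α → α} {g : α → ℝ}

/-- Garsia's recursion for the maximal function. -/
noncomputable def maxG (T : α → α) (g : α → ℝ) : ℕ → α → ℝ
  | 0 => fun _ => 0
  | (N + 1) => fun x => max 0 (g x + maxG T g N (T x))

lemma maxG_nonneg (N : ℕ) (x : α) : 0 ≤ maxG T g N x := by
  cases N with
  | zero => exact le_refl _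
  | succ N => exact le_max_left _ _

lemma maxG_succ (N : ℕ) (x : α) : maxG T g (N + 1) x = max 0 (g x + maxG T g N (T x)) := rfl

lemma maxG_mono (N : ℕ) (x : α) : maxG T g N x ≤ maxG T g (N + 1) x := by
  induction N generalizing x with
  | zero => exact maxG_nonneg 1 x
  | succ N ih =>
      rw [maxG_succ, maxG_succ]
      exact max_le_max (le_refl 0) (by linarith [ih (T x)])

lemma maxG_mono' {M N : ℕ} (h : M ≤ N) (x : α) : maxG T g M x ≤ maxG T g N x := by
  induction N with
  | zero => simpa [Nat.le_zero.mp h]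
  | succ N ih =>
      rcases Nat.lt_or_ge M (N + 1) with h' | h'
      · exact (ih (Nat.lt_succ_iff.mp h')).trans (maxG_mono N x)
      · have : M = N + 1 := le_antisymm h h'
        simp [this]

lemma measurable_maxG (hT : Measurable T) (hg : Measurable g) (N : ℕ) :
    Measurable (maxG T g N) := by
  induction N with
  | zero => exact measurable_const
  | succ N ih => exact measurable_const.max (hg.add (ih.comp hT))

lemma integrable_maxG (hT : MeasurePreserving T μ μ) (hmg : Measurable g)
    (hg : Integrable g μ) (N : ℕ) : Integrable (maxG T g N) μ := by
  induction N with
  | zero => exact integrable_const 0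
  | succ N ih =>
      have hcomp : Integrable (maxG T g N ∘ T) μ :=
        (hT.integrable_comp (measurable_maxG hT.measurable hmg N).aestronglyMeasurable).mpr ih
      have := (hg.add hcomp).pos_part
      refine this.congr (Eventually.of_forall fun x => ?_)
      simp [maxG_succ, max_comm, Function.comp]

lemma maxG_ge_sum (n : ℕ) (x : α) :
    (∑ i ∈ Finset.range (n + 1), g (T^[i] x)) ≤ maxG T g (n + 1) x := by
  induction n generalizing x with
  | zero =>
      rw [Finset.sum_range_one, maxG_succ, Function.iterate_zero_apply]
      have h0 : maxG T g 0 (T x) = 0 := rfl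
      rw [h0, add_zero]
      exact le_max_right 0 (g x)
  | succ n ih =>
      have hsum : ∑ i ∈ Finset.range (n + 2), g (T^[i] x)
          = (∑ i ∈ Finset.range (n + 1), g (T^[i] (T x))) + g x := by
        rw [Finset.sum_range_succ']
        simp [Function.iterate_succ_apply]
      rw [hsum, maxG_succ]
      have := ih (T x)
      calc (∑ i ∈ Finset.range (n + 1), g (T^[i] (T x))) + g x
          ≤ g x + maxG T g (n + 1) (T x) := by linarith
        _ ≤ max 0 (g x + maxG T g (n + 1) (T x)) := le_max_right _ _

set_option maxHeartbeats 1000000 in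
/-- The maximal ergodic theorem (Garsia's form, sufficient for Birkhoff). -/
lemma maximal_ergodic (hT : MeasurePreserving T μ μ) (hmg : Measurable g)
    (hg : Integrable g μ)
    (hae : ∀ᵐ x ∂μ, ∃ n : ℕ, 0 < ∑ i ∈ Finset.range (n + 1), g (T^[i] x)) :
    0 ≤ ∫ x, g x ∂μ := by
  set E : ℕ → Set α := fun N => {x | 0 < maxG T g (N + 1) x} with hE
  have hEm : ∀ N, MeasurableSet (E N) := fun N =>
    measurableSet_lt measurable_const (measurable_maxG hT.measurable hmg (N + 1))
  have hEmono : Monotone E := by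
    intro M N h x hx
    exact lt_of_lt_of_le hx (maxG_mono' (Nat.succ_le_succ h) x)
  have hint : ∀ N, Integrable (maxG T g N) μ := integrable_maxG hT hmg hg
  have hcomp : ∀ N, Integrable (fun x => maxG T g N (T x)) μ := fun N =>
    (hT.integrable_comp (measurable_maxG hT.measurable hmg N).aestronglyMeasurable).mpr (hint N)
  -- For every N, the integral of g over E N is nonnegative.
  have key : ∀ N, 0 ≤ ∫ x in E N, g x ∂μ := by
    intro N
    have hIC : ∫ x, maxG T g N (T x) ∂μ = ∫ x, maxG T g N x ∂μ := by
      rw [← integral_map hT.measurable.aemeasurable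
        (measurable_maxG hT.measurable hmg N).aestronglyMeasurable, hT.map_eq]
    have hmono : ∫ x, maxG T g N x ∂μ ≤ ∫ x, maxG T g (N + 1) x ∂μ :=
      integral_mono (hint N) (hint (N + 1)) (fun x => maxG_mono N x)
    have hdiffint : Integrable (fun x => maxG T g (N + 1) x - maxG T g N (T x)) μ :=
      (hint (N + 1)).sub (hcomp N)
    have h3 : 0 ≤ ∫ x, (maxG T g (N + 1) x - maxG T g N (T x)) ∂μ := by
      rw [integral_sub (hint (N + 1)) (hcomp N)]
      linarith
    have h4 : ∫ x in (E N)ᶜ, (maxG T g (N + 1) x - maxG T g N (T x)) ∂μ ≤ 0 := by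
      refine setIntegral_nonpos (hEm N).compl (fun x hx => ?_)
      have h1 : maxG T g (N + 1) x ≤ 0 := le_of_not_gt hx
      have h2 : 0 ≤ maxG T g N (T x) := maxG_nonneg N (T x)
      linarith
    have h5 : 0 ≤ ∫ x in E N, (maxG T g (N + 1) x - maxG T g N (T x)) ∂μ := by
      have := integral_add_compl (hEm N) hdiffint
      linarith
    refine h5.trans (setIntegral_mono_on (hdiffint.integrableOn) (hg.integrableOn)
      (hEm N) (fun x hx => ?_))
    have hpos : (0:ℝ) < maxG T g (N + 1) x := hx
    have heq : maxG T g (N + 1) x = g x + maxG T g N (T x) := by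
      rw [maxG_succ] at hpos ⊢
      rcases le_or_gt (g x + maxG T g N (T x)) 0 with h | h
      · rw [max_eq_left h] at hpos; exact absurd hpos (lt_irrefl 0)
      · exact max_eq_right h.le
    linarith [heq]
  -- The union of the sets E N has full measure.
  have hU : ∀ᵐ x ∂μ, x ∈ ⋃ N, E N := by
    filter_upwards [hae] with x hx
    obtain ⟨n, hn⟩ := hx
    exact Set.mem_iUnion.mpr ⟨n, lt_of_lt_of_le hn (maxG_ge_sum n x)⟩
  have hc0 : μ (⋃ N, E N)ᶜ = 0 := by
    rw [Set.compl_iUnion]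
    have : (⋂ i, (E i)ᶜ) = {a | ∀ i, a ∉ E i} := by ext a; simp
    rw [this]
    simpa [ae_iff] using hU
  have hmeq : μ.restrict (⋃ N, E N) = μ := by
    have h1 : μ.restrict (⋃ N, E N) = μ.restrict Set.univ :=
      Measure.restrict_congr_set (ae_eq_univ.mpr hc0)
    rwa [Measure.restrict_univ] at h1
  have htend : Tendsto (fun N => ∫ x in E N, g x ∂μ) atTop (𝓝 (∫ x in ⋃ N, E N, g x ∂μ)) :=
    tendsto_setIntegral_of_monotone hEm hEmono hg.integrableOn
  have : 0 ≤ ∫ x in ⋃ N, E N, g x ∂μ := ge_of_tendsto htend (Eventually.of_forall key)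
  rwa [hmeq] at this

end Maximal

section Birkhoff

variable {α : Type*} [MeasurableSpace α] {μ : Measure α} [IsProbabilityMeasure μ]
  {T : α → α} {f : α → ℝ}

/-- Birkhoff averages. -/
noncomputable def birkA (T : α → α) (f : α → ℝ) (n : ℕ) (x : α) : ℝ :=
  (∑ i ∈ Finset.range n, f (T^[i] x)) / n


/-- Birkhoff's pointwise ergodic theorem for `[0,1]`-valued measurable functions. -/
theorem birkhoff01 (hT : Ergodic T μ) (hmf : Measurable f)
    (h0 : ∀ x, 0 ≤ f x) (h1 : ∀ x, f x ≤ 1) :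
    ∀ᵐ x ∂μ, Tendsto (fun n => birkA T f n x) atTop (𝓝 (∫ x, f x ∂μ)) := by
  have hS0 : ∀ (n : ℕ) (x : α), 0 ≤ ∑ i ∈ Finset.range n, f (T^[i] x) := fun n x =>
    Finset.sum_nonneg fun i _ => h0 _
  have hSn : ∀ (n : ℕ) (x : α), (∑ i ∈ Finset.range n, f (T^[i] x)) ≤ n := by
    intro n x
    calc (∑ i ∈ Finset.range n, f (T^[i] x)) ≤ ∑ _i ∈ Finset.range n, 1 :=
          Finset.sum_le_sum fun i _ => h1 _
      _ = n := by simp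
  have hA0 : ∀ (n : ℕ) (x : α), 0 ≤ birkA T f n x := fun n x =>
    div_nonneg (hS0 n x) (Nat.cast_nonneg n)
  have hA1 : ∀ (n : ℕ) (x : α), birkA T f n x ≤ 1 := by
    intro n x
    rcases Nat.eq_zero_or_pos n with rfl | hn
    · simp [birkA]
    · have hnpos : (0:ℝ) < n := by exact_mod_cast hn
      rw [birkA, div_le_one hnpos]
      exact hSn n x
  have hAm : ∀ n, Measurable (birkA T f n) := fun n =>
    (Finset.measurable_sum _ fun i _ =>
      hmf.comp (hT.toMeasurePreserving.measurable.iterate i)).div_const _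
  -- the key estimate comparing averages at `T x` with averages at `x`
  have hrel : ∀ (x : α) (n : ℕ), 1 ≤ n → |birkA T f n (T x) - birkA T f (n + 1) x| ≤ 2 / (n + 1) := by
    intro x n hn
    set s : ℝ := ∑ i ∈ Finset.range n, f (T^[i] (T x)) with hs
    have hs0 : 0 ≤ s := hS0 n (T x)
    have hs1 : s ≤ n := hSn n (T x)
    have hnpos : (0:ℝ) < n := by exact_mod_cast hn
    have hn1pos : (0:ℝ) < (n:ℝ) + 1 := by linarith
    have hAn : birkA T f n (T x) = s / n := rfl
    have hAn1 : birkA T f (n + 1) x = (s + f x) / ((n:ℝ) + 1) := by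
      rw [birkA]
      have hsum : ∑ i ∈ Finset.range (n + 1), f (T^[i] x) = s + f x := by
        rw [Finset.sum_range_succ']
        simp [hs, Function.iterate_succ_apply, add_comm]
      rw [hsum]
      push_cast
      ring
    have heq : birkA T f n (T x) - birkA T f (n + 1) x = (s - n * f x) / (n * ((n:ℝ) + 1)) := by
      rw [hAn, hAn1]
      field_simp
      ring
    rw [heq, abs_div, abs_of_pos (mul_pos hnpos hn1pos)]
    have habs : |s - n * f x| ≤ n := by
      rw [abs_le]
      constructor
      · nlinarith [h0 x, h1 x]
      · nlinarith [h0 x, h1 x]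
    calc |s - n * f x| / ((n:ℝ) * ((n:ℝ) + 1)) ≤ (n:ℝ) / ((n:ℝ) * ((n:ℝ) + 1)) := by
          gcongr
      _ = 1 / ((n:ℝ) + 1) := by field_simp
      _ ≤ 2 / ((n:ℝ) + 1) := by gcongr <;> norm_num
  have htends : ∀ x : α, Tendsto (fun n => birkA T f n (T x) - birkA T f (n + 1) x) atTop (𝓝 0) := by
    intro x
    refine squeeze_zero_norm' (a := fun n : ℕ => 2 / ((n:ℝ) + 1)) ?_ ?_
    · filter_upwards [eventually_ge_atTop 1] with n hn
      simpa using hrel x n hn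
    · have h3 := (tendsto_const_div_atTop_nhds_zero_nat (2:ℝ)).comp (tendsto_add_atTop_nat 1)
      refine h3.congr fun n => ?_
      simp [Function.comp]
  have hbd_le : ∀ x : α, IsBoundedUnder (· ≤ ·) atTop (fun n => birkA T f n x) := fun x =>
    isBoundedUnder_of ⟨1, fun n => hA1 n x⟩
  have hbd_ge : ∀ x : α, IsBoundedUnder (· ≥ ·) atTop (fun n => birkA T f n x) := fun x =>
    isBoundedUnder_of ⟨0, fun n => hA0 n x⟩
  set φ : α → ℝ := fun x => limsup (fun n => birkA T f n x) atTop with hφ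
  set ψ : α → ℝ := fun x => liminf (fun n => birkA T f n x) atTop with hψ
  have hφinv : ∀ x, (φ ∘ T) x = φ x := by
    intro x
    have h1' : limsup (fun n => birkA T f n (T x)) atTop
        = limsup (fun n => birkA T f (n + 1) x) atTop :=
      limsup_eq_limsup_of_tendsto_sub (htends x) (fun n => hA0 n (T x)) (fun n => hA1 n (T x))
        (fun n => hA0 _ x) (fun n => hA1 _ x)
    show limsup (fun n => birkA T f n (T x)) atTop = limsup (fun n => birkA T f n x) atTop
    rw [h1', limsup_nat_add (fun n => birkA T f n x) 1]
  have hψinv : ∀ x, (ψ ∘ T) x = ψ x := by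
    intro x
    have h1' : liminf (fun n => birkA T f n (T x)) atTop
        = liminf (fun n => birkA T f (n + 1) x) atTop :=
      liminf_eq_liminf_of_tendsto_sub (htends x) (fun n => hA0 n (T x)) (fun n => hA1 n (T x))
        (fun n => hA0 _ x) (fun n => hA1 _ x)
    show liminf (fun n => birkA T f n (T x)) atTop = liminf (fun n => birkA T f n x) atTop
    rw [h1', liminf_nat_add (fun n => birkA T f n x) 1]
  have hφm : Measurable φ := Measurable.limsup hAm
  have hψm : Measurable ψ := Measurable.liminf hAm
  obtain ⟨cφ, hcφ⟩ := hT.toPreErgodic.ae_eq_const_of_ae_eq_comp hφm (funext hφinv)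
  obtain ⟨cψ, hcψ⟩ := hT.toPreErgodic.ae_eq_const_of_ae_eq_comp hψm (funext hψinv)
  have hfi : Integrable f μ := by
    refine Integrable.mono' (integrable_const 1) hmf.aestronglyMeasurable ?_
    exact Eventually.of_forall fun x => by
      rw [Real.norm_eq_abs, abs_of_nonneg (h0 x)]; exact h1 x
  -- cφ ≤ ∫ f
  have hclaim1 : cφ ≤ ∫ x, f x ∂μ := by
    by_contra hlt
    push_neg at hlt
    set ε : ℝ := (cφ - ∫ x, f x ∂μ) / 2 with hεdef
    have hε : 0 < ε := by rw [hεdef]; linarith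
    set g : α → ℝ := fun x => f x - (cφ - ε) with hgdef
    have hmg : Measurable g := hmf.sub measurable_const
    have hgint : Integrable g μ := hfi.sub (integrable_const _)
    have hae : ∀ᵐ x ∂μ, ∃ n : ℕ, 0 < ∑ i ∈ Finset.range (n + 1), g (T^[i] x) := by
      filter_upwards [hcφ] with x hx
      have hxeq : limsup (fun n => birkA T f n x) atTop = cφ := hx
      have hlt2 : cφ - ε < limsup (fun n => birkA T f n x) atTop := by
        rw [hxeq]; linarith
      have hfreq : ∃ᶠ n in atTop, cφ - ε < birkA T f n x :=
        frequently_lt_of_lt_limsup (hbd_ge x).isCoboundedUnder_le hlt2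
      obtain ⟨n, hn1, hn2⟩ := (hfreq.and_eventually (eventually_ge_atTop 1)).exists
      obtain ⟨m, rfl⟩ : ∃ m, n = m + 1 := ⟨n - 1, by omega⟩
      refine ⟨m, ?_⟩
      have hnpos : (0:ℝ) < ((m:ℝ) + 1) := by positivity
      have h' : cφ - ε < (∑ i ∈ Finset.range (m + 1), f (T^[i] x)) / ((m:ℝ) + 1) := by
        rw [birkA] at hn1
        convert hn1 using 3
        push_cast
        ring
      have hlt3 : (cφ - ε) * ((m:ℝ) + 1) < ∑ i ∈ Finset.range (m + 1), f (T^[i] x) :=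
        (lt_div_iff₀ hnpos).mp h'
      have hsumeq : ∑ i ∈ Finset.range (m + 1), g (T^[i] x)
          = (∑ i ∈ Finset.range (m + 1), f (T^[i] x)) - ((m:ℝ) + 1) * (cφ - ε) := by
        rw [hgdef]
        rw [Finset.sum_sub_distrib, Finset.sum_const, Finset.card_range]
        push_cast
        ring
      rw [hsumeq]
      nlinarith
    have hmax := maximal_ergodic hT.toMeasurePreserving hmg hgint hae
    have hgeq : ∫ x, g x ∂μ = (∫ x, f x ∂μ) - (cφ - ε) := by
      rw [hgdef, integral_sub hfi (integrable_const _), integral_const]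
      simp
    rw [hgeq] at hmax
    rw [hεdef] at hmax
    linarith
  -- ∫ f ≤ cψ
  have hclaim2 : ∫ x, f x ∂μ ≤ cψ := by
    refine real_le_of_forall_pos_le_add fun ε hε => ?_
    set g : α → ℝ := fun x => (cψ + ε) - f x with hgdef
    have hmg : Measurable g := measurable_const.sub hmf
    have hgint : Integrable g μ := (integrable_const _).sub hfi
    have hae : ∀ᵐ x ∂μ, ∃ n : ℕ, 0 < ∑ i ∈ Finset.range (n + 1), g (T^[i] x) := by
      filter_upwards [hcψ] with x hx
      have hxeq : liminf (fun n => birkA T f n x) atTop = cψ := hx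
      have hlt2 : liminf (fun n => birkA T f n x) atTop < cψ + ε := by
        rw [hxeq]; linarith
      have hfreq : ∃ᶠ n in atTop, birkA T f n x < cψ + ε :=
        frequently_lt_of_liminf_lt (hbd_le x).isCoboundedUnder_ge hlt2
      obtain ⟨n, hn1, hn2⟩ := (hfreq.and_eventually (eventually_ge_atTop 1)).exists
      obtain ⟨m, rfl⟩ : ∃ m, n = m + 1 := ⟨n - 1, by omega⟩
      refine ⟨m, ?_⟩
      have hnpos : (0:ℝ) < ((m:ℝ) + 1) := by positivity
      have h' : (∑ i ∈ Finset.range (m + 1), f (T^[i] x)) / ((m:ℝ) + 1) < cψ + ε := by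
        rw [birkA] at hn1
        convert hn1 using 3
        push_cast
        ring
      have hlt3 : (∑ i ∈ Finset.range (m + 1), f (T^[i] x)) < (cψ + ε) * ((m:ℝ) + 1) :=
        (div_lt_iff₀ hnpos).mp h'
      have hsumeq : ∑ i ∈ Finset.range (m + 1), g (T^[i] x)
          = ((m:ℝ) + 1) * (cψ + ε) - ∑ i ∈ Finset.range (m + 1), f (T^[i] x) := by
        rw [hgdef]
        rw [Finset.sum_sub_distrib, Finset.sum_const, Finset.card_range]
        push_cast
        ring
      rw [hsumeq]
      nlinarith
    have hmax := maximal_ergodic hT.toMeasurePreserving hmg hgint hae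
    have hgeq : ∫ x, g x ∂μ = (cψ + ε) - ∫ x, f x ∂μ := by
      rw [hgdef, integral_sub (integrable_const _) hfi, integral_const]
      simp
    rw [hgeq] at hmax
    linarith
  -- cψ ≤ cφ
  haveI : (ae μ).NeBot := IsProbabilityMeasure.ae_neBot
  have hclaim3 : cψ ≤ cφ := by
    obtain ⟨x, hx1, hx2⟩ := (hcφ.and hcψ).exists
    have hll : liminf (fun n => birkA T f n x) atTop ≤ limsup (fun n => birkA T f n x) atTop :=
      liminf_le_limsup (hbd_le x) (hbd_ge x)
    have e1 : limsup (fun n => birkA T f n x) atTop = cφ := hx1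
    have e2 : liminf (fun n => birkA T f n x) atTop = cψ := hx2
    rw [e1, e2] at hll
    exact hll
  filter_upwards [hcφ, hcψ] with x hx1 hx2
  have e1 : limsup (fun n => birkA T f n x) atTop = cφ := hx1
  have e2 : liminf (fun n => birkA T f n x) atTop = cψ := hx2
  have hsup : limsup (fun n => birkA T f n x) atTop = ∫ x, f x ∂μ := by
    rw [e1]; linarith
  have hinf : liminf (fun n => birkA T f n x) atTop = ∫ x, f x ∂μ := by
    rw [e2]; linarith
  exact tendsto_of_liminf_eq_limsup hinf hsup (hbd_le x) (hbd_ge x)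

end Birkhoff

section Application

lemma cylinder_measurableSet (C : Cylinder) : MeasurableSet C.set := by
  have h : C.set = ⋂ j : Fin C.dim,
      {x : ℕ → ℝ | (C.a j : ℝ) ≤ x j.val ∧ x j.val ≤ (C.b j : ℝ)} := by
    ext x
    simp [Cylinder.set, Set.mem_iInter]
  rw [h]
  refine MeasurableSet.iInter fun j => ?_
  exact (measurableSet_le measurable_const (measurable_pi_apply _)).inter
    (measurableSet_le (measurable_pi_apply _) measurable_const)

lemma measurable_shift : Measurable shift :=
  measurable_pi_lambda _ fun n => measurable_pi_apply (n + 1)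

lemma shift_iterate (i : ℕ) (x : ℕ → ℝ) : shift^[i] x = fun j => x (j + i) := by
  induction i generalizing x with
  | zero => simp
  | succ i ih =>
      rw [Function.iterate_succ_apply, ih]
      funext j
      rfl

lemma indicator_nu_nonneg (S : Set (ℕ → ℝ)) (y : ℕ → ℝ) :
    0 ≤ S.indicator (fun _ => (1:ℝ)) y :=
  Set.indicator_nonneg (fun _ _ => zero_le_one) y

lemma indicator_nu_le_one (S : Set (ℕ → ℝ)) (y : ℕ → ℝ) :
    S.indicator (fun _ => (1:ℝ)) y ≤ 1 :=
  Set.indicator_apply_le' (fun _ => le_rfl) (fun _ => zero_le_one)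

lemma nu_nonneg (n : ℕ) (X : ℕ → ℝ) (l : ℕ) (S : Set (ℕ → ℝ)) : 0 ≤ nu n X l S := by
  rw [nu]
  split_ifs with h
  · have hln : (l:ℝ) ≤ n := by exact_mod_cast h.1
    exact div_nonneg (Finset.sum_nonneg fun i _ => indicator_nu_nonneg S _) (by linarith)
  · exact le_refl 0

lemma nu_le_one (n : ℕ) (X : ℕ → ℝ) (l : ℕ) (S : Set (ℕ → ℝ)) : nu n X l S ≤ 1 := by
  rw [nu]
  split_ifs with h
  · have hln : (l:ℝ) ≤ n := by exact_mod_cast h.1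
    have hpos : (0:ℝ) < (n:ℝ) - l + 1 := by linarith
    rw [div_le_one hpos]
    calc (∑ i ∈ Finset.range (n - l + 1), S.indicator (fun _ => (1:ℝ)) (fun j => X (i + j)))
        ≤ ∑ _i ∈ Finset.range (n - l + 1), 1 :=
          Finset.sum_le_sum fun i _ => indicator_nu_le_one S _
      _ = ((n - l + 1 : ℕ):ℝ) := by simp
      _ = (n:ℝ) - l + 1 := by
          rw [Nat.cast_add, Nat.cast_sub h.1, Nat.cast_one]
  · exact zero_le_one

lemma nu_eq_birkA (x : ℕ → ℝ) (C : Cylinder) {n : ℕ} (hn : C.dim ≤ n) :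
    nu n x C.dim C.set = birkA shift (C.set.indicator fun _ => (1:ℝ)) (n - C.dim + 1) x := by
  rw [nu, if_pos ⟨hn, C.dimPos⟩, birkA]
  have hcast : ((n - C.dim + 1 : ℕ):ℝ) = (n:ℝ) - C.dim + 1 := by
    rw [Nat.cast_add, Nat.cast_sub hn, Nat.cast_one]
  rw [← hcast]
  congr 1
  refine Finset.sum_congr rfl fun i _ => ?_
  have harg : (fun j => x (i + j)) = shift^[i] x := by
    rw [shift_iterate]
    funext j
    rw [add_comm]
  rw [harg]

/-- A.e. convergence of the empirical frequency of a cylinder set. -/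
lemma nu_tendsto (μX : Measure (ℕ → ℝ)) [IsProbabilityMeasure μX]
    (hX : Ergodic shift μX) (C : Cylinder) :
    ∀ᵐ x ∂μX, Tendsto (fun n => nu n x C.dim C.set) atTop (𝓝 ((μX C.set).toReal)) := by
  have hms := cylinder_measurableSet C
  have hmg : Measurable (C.set.indicator fun _ => (1:ℝ)) := measurable_const.indicator hms
  have hint : ∫ x, (C.set.indicator fun _ => (1:ℝ)) x ∂μX = (μX C.set).toReal := by
    rw [integral_indicator_const (1:ℝ) hms]
    simp
    rfl
  have hb := birkhoff01 hX hmg (fun y => indicator_nu_nonneg C.set y)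
    (fun y => indicator_nu_le_one C.set y)
  rw [hint] at hb
  filter_upwards [hb] with x hx
  have hcomp : Tendsto (fun n : ℕ => n - C.dim + 1) atTop atTop :=
    (tendsto_add_atTop_nat 1).comp (tendsto_sub_atTop_nat C.dim)
  have h2 : Tendsto (fun n => birkA shift (C.set.indicator fun _ => (1:ℝ)) (n - C.dim + 1) x)
      atTop (𝓝 ((μX C.set).toReal)) := hx.comp hcomp
  refine Tendsto.congr' ?_ h2
  filter_upwards [eventually_ge_atTop C.dim] with n hn
  exact (nu_eq_birkA x C hn).symm

end Application

/-- The one-sample empirical distributional distance to a known process measure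
converges almost surely to the distributional distance. -/
theorem stmt6 (w : ℕ → ℝ) (hw : ∀ i, 0 < w i) (hsum : Summable w)
    (B : ℕ → Cylinder) (μX ρ : Measure (ℕ → ℝ))
    [IsProbabilityMeasure μX] [IsProbabilityMeasure ρ]
    (hX : Ergodic shift μX) :
    ∀ᵐ x ∂μX, Tendsto (fun k => dhat1 w B k x ρ) atTop (𝓝 (dd w B μX ρ)) := by
  have hall : ∀ᵐ x ∂μX, ∀ i : ℕ,
      Tendsto (fun n => nu n x (B i).dim (B i).set) atTop (𝓝 ((μX (B i).set).toReal)) :=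
    (ae_all_iff).mpr fun i => nu_tendsto μX hX (B i)
  filter_upwards [hall] with x hx
  simp only [dhat1, dd]
  have hρ1 : ∀ i, (ρ (B i).set).toReal ≤ 1 := by
    intro i
    have h : ρ (B i).set ≤ 1 := by
      have := measure_mono (μ := ρ) (Set.subset_univ (B i).set)
      rwa [measure_univ] at this
    have h2 : (ρ (B i).set).toReal ≤ (1:ENNReal).toReal := ENNReal.toReal_mono ENNReal.one_ne_top h
    simpa using h2
  have key := tendsto_tsum_of_dominated_convergence
    (f := fun n k => w k * |nu n x (B k).dim (B k).set - (ρ (B k).set).toReal|)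
    (g := fun k => w k * |(μX (B k).set).toReal - (ρ (B k).set).toReal|)
    (bound := fun k => 2 * w k)
    (hsum.mul_left 2)
    (fun k => (((hx k).sub_const _).abs.const_mul (w k)))
    ?_
  · exact key
  · refine Eventually.of_forall fun n => fun k => ?_
    have h1 : |nu n x (B k).dim (B k).set - (ρ (B k).set).toReal| ≤ 2 := by
      have := nu_nonneg n x (B k).dim (B k).set
      have := nu_le_one n x (B k).dim (B k).set
      have := hρ1 k
      have h0' : (0:ℝ) ≤ (ρ (B k).set).toReal := ENNReal.toReal_nonneg
      rw [abs_le]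
      constructor <;> linarith
    rw [Real.norm_eq_abs, abs_mul, abs_of_pos (hw k), abs_abs]
    calc w k * |nu n x (B k).dim (B k).set - (ρ (B k).set).toReal| ≤ w k * 2 := by
          have := (hw k).le
          nlinarith
      _ = 2 * w k := by ring
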